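/- (Addition of points on a quartic elliptic curve.) Let a₀, a₁, a₂, a₃, a₄, c, x₁, y₁, x₂, y₂ ∈ ℂ with c² = a₄, y₁² = f(x₁), y₂² = f(x₂), and x₁ ≠ x₂, where f(x) = a₄x⁴ + a₃x³ + a₂x² + a₁x + a₀. Define the parabola P(x) = b₂x² + b₁x + b₀ := c(x - x₁)(x - x₂) + (x - x₂)y₁/(x₁ - x₂) + (x - x₁)y₂/(x₂ - x₁) (so b₂ = c, b₁ = -c(x₁ + x₂) + (y₁ - y₂)/(x₁ - x₂), b₀ = c·x₁x₂ + (x₁y₂ - x₂y₁)/(x₁ - x₂)). Assume 2b₁b₂ - a₃ ≠ 0 and set x₃ = -x₁ - x₂ - (2b₀b₂ + b₁² - a₂)/(2b₁b₂ - a₃) and y₃ = -P(x₃). Then y₃² = f(x₃), i.e. the point (x₃, y₃) again lies on the curve y² = f(x). -/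

import Mathlib

/-- Addition of points on a quartic elliptic curve
`y² = f(x) = a₄x⁴ + a₃x³ + a₂x² + a₁x + a₀`: if `(x₁,y₁)` and `(x₂,y₂)` lie on the
curve, `x₁ ≠ x₂`, `P` is the interpolating parabola with leading coefficient `c = √a₄`,
and `x₃, y₃` are defined by the chord-addition formula, then `(x₃,y₃)` lies on the
curve again. -/
theorem quartic_elliptic_curve_point_addition
    (a0 a1 a2 a3 a4 c x1 y1 x2 y2 b0 b1 b2 x3 y3 : ℂ)
    (hc : c ^ 2 = a4)
    (h1 : y1 ^ 2 = a4 * x1 ^ 4 + a3 * x1 ^ 3 + a2 * x1 ^ 2 + a1 * x1 + a0)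
    (h2 : y2 ^ 2 = a4 * x2 ^ 4 + a3 * x2 ^ 3 + a2 * x2 ^ 2 + a1 * x2 + a0)
    (hx : x1 ≠ x2)
    (P : ℂ → ℂ)
    (hPdef : ∀ x, P x = c * (x - x1) * (x - x2) + (x - x2) * y1 / (x1 - x2)
        + (x - x1) * y2 / (x2 - x1))
    (hPb : ∀ x, P x = b2 * x ^ 2 + b1 * x + b0)
    (hb2 : b2 = c)
    (hb1 : b1 = -c * (x1 + x2) + (y1 - y2) / (x1 - x2))
    (hb0 : b0 = c * x1 * x2 + (x1 * y2 - x2 * y1) / (x1 - x2))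
    (hden : 2 * b1 * b2 - a3 ≠ 0)
    (hx3 : x3 = -x1 - x2 - (2 * b0 * b2 + b1 ^ 2 - a2) / (2 * b1 * b2 - a3))
    (hy3 : y3 = -P x3) :
    y3 ^ 2 = a4 * x3 ^ 4 + a3 * x3 ^ 3 + a2 * x3 ^ 2 + a1 * x3 + a0 := by
  have hd : x1 - x2 ≠ 0 := sub_ne_zero.mpr hx
  have hd' : x2 - x1 ≠ 0 := sub_ne_zero.mpr hx.symm
  have hP1 : P x1 = y1 := by
    rw [hPdef]; field_simp; ring
  have hP2 : P x2 = y2 := by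
    rw [hPdef]; field_simp; ring
  have key : ∀ x : ℂ, a4 * x ^ 4 + a3 * x ^ 3 + a2 * x ^ 2 + a1 * x + a0 - (P x) ^ 2 =
      (a3 - 2 * b1 * b2) * x ^ 3 + (a2 - 2 * b0 * b2 - b1 ^ 2) * x ^ 2
        + (a1 - 2 * b0 * b1) * x + (a0 - b0 ^ 2) := by
    intro x
    rw [hPb, hb2, ← hc]; ring
  have e1 : (a3 - 2 * b1 * b2) * x1 ^ 3 + (a2 - 2 * b0 * b2 - b1 ^ 2) * x1 ^ 2
      + (a1 - 2 * b0 * b1) * x1 + (a0 - b0 ^ 2) = 0 := by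
    have k := key x1
    rw [hP1, h1] at k
    linear_combination -k
  have e2 : (a3 - 2 * b1 * b2) * x2 ^ 3 + (a2 - 2 * b0 * b2 - b1 ^ 2) * x2 ^ 2
      + (a1 - 2 * b0 * b1) * x2 + (a0 - b0 ^ 2) = 0 := by
    have k := key x2
    rw [hP2, h2] at k
    linear_combination -k
  have hB2 : a2 - 2 * b0 * b2 - b1 ^ 2 = -(a3 - 2 * b1 * b2) * (x1 + x2 + x3) := by
    rw [hx3]
    rw [show -(a3 - 2 * b1 * b2) * (x1 + x2 + (-x1 - x2 - (2 * b0 * b2 + b1 ^ 2 - a2) / (2 * b1 * b2 - a3))) = -((2 * b1 * b2 - a3) * ((2 * b0 * b2 + b1 ^ 2 - a2) / (2 * b1 * b2 - a3))) by ring, mul_div_cancel₀ _ hden]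
    ring
  have final0 : (x1 - x2) * ((a3 - 2 * b1 * b2) * x3 ^ 3 + (a2 - 2 * b0 * b2 - b1 ^ 2) * x3 ^ 2
      + (a1 - 2 * b0 * b1) * x3 + (a0 - b0 ^ 2)) = 0 := by
    linear_combination (x3 - x2) * e1 + (x1 - x3) * e2 +
      ((x1 - x2) * x3 ^ 2 - (x3 - x2) * x1 ^ 2 - (x1 - x3) * x2 ^ 2) * hB2
  have final : (a3 - 2 * b1 * b2) * x3 ^ 3 + (a2 - 2 * b0 * b2 - b1 ^ 2) * x3 ^ 2
      + (a1 - 2 * b0 * b1) * x3 + (a0 - b0 ^ 2) = 0 :=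
    (mul_eq_zero.mp final0).resolve_left hd
  have k3 := key x3
  rw [hy3]
  linear_combination -k3 - final
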